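/- Let −1 < ζ ≤ 2 and define θ : ℝ → ℝ by θ(t) = 2 − 3·tanh²( t/√2 + artanh( √((2−ζ)/3) ) ). Then θ is twice continuously differentiable, θ''(t) + θ(t)² − 1 = 0 for all t, θ(0) = ζ, θ(t) → −1 as t → ∞, and moreover (1/2)θ'(t)² + (1/3)θ(t)³ − θ(t) = 2/3 for all t. -/

import Mathlib

/-- The inverse hyperbolic tangent. -/
noncomputable def artanh (x : ℝ) : ℝ := (1 / 2) * Real.log ((1 + x) / (1 - x))

/-- The explicit solution of `θ'' + θ² - 1 = 0` with `θ(0) = ζ` and `θ(∞) = -1`. -/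
noncomputable def θsol (ζ : ℝ) (t : ℝ) : ℝ :=
  2 - 3 * Real.tanh (t / Real.sqrt 2 + artanh (Real.sqrt ((2 - ζ) / 3))) ^ 2

lemma tanh_eq_fun : Real.tanh = fun y => Real.sinh y / Real.cosh y :=
  funext fun _ => Real.tanh_eq_sinh_div_cosh _

lemma tanh_hasDerivAt (x : ℝ) : HasDerivAt Real.tanh (1 - Real.tanh x ^ 2) x := by
  have h : HasDerivAt (fun y => Real.sinh y / Real.cosh y)
      ((Real.cosh x * Real.cosh x - Real.sinh x * Real.sinh x) / Real.cosh x ^ 2) x :=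
    (Real.hasDerivAt_sinh x).div (Real.hasDerivAt_cosh x) (Real.cosh_pos x).ne'
  rw [tanh_eq_fun]
  convert h using 1
  simp only
  have hc := (Real.cosh_pos x).ne'
  field_simp

lemma contDiff_tanh : ContDiff ℝ 2 Real.tanh := by
  rw [tanh_eq_fun]
  exact Real.contDiff_sinh.div Real.contDiff_cosh fun x => (Real.cosh_pos x).ne'

lemma tanh_eq_exp (x : ℝ) :
    Real.tanh x = (Real.exp (2 * x) - 1) / (Real.exp (2 * x) + 1) := by
  have hx : Real.exp x ≠ 0 := (Real.exp_pos x).ne'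
  have h2 : Real.exp (2 * x) = Real.exp x * Real.exp x := by rw [two_mul, Real.exp_add]
  have hden : Real.exp x + Real.exp (-x) ≠ 0 := by positivity
  have hden2 : Real.exp x * Real.exp x + 1 ≠ 0 := by positivity
  rw [Real.tanh_eq_sinh_div_cosh, Real.sinh_eq, Real.cosh_eq, h2, Real.exp_neg]
  field_simp

lemma tanh_artanh {x : ℝ} (h1 : -1 < x) (h2 : x < 1) : Real.tanh (artanh x) = x := by
  have hx : (0:ℝ) < (1 + x) / (1 - x) := div_pos (by linarith) (by linarith)
  have he : Real.exp (2 * artanh x) = (1 + x) / (1 - x) := by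
    rw [artanh, show (2:ℝ) * ((1/2) * Real.log ((1 + x) / (1 - x)))
      = Real.log ((1 + x) / (1 - x)) by ring, Real.exp_log hx]
  have hne : (1:ℝ) - x ≠ 0 := by linarith
  have hne2 : (1 + x) / (1 - x) + 1 ≠ 0 := by
    have : (1 + x) / (1 - x) + 1 = 2 / (1 - x) := by field_simp; ring
    rw [this]; positivity
  rw [tanh_eq_exp, he]
  field_simp
  ring

lemma tanh_tendsto : Filter.Tendsto Real.tanh Filter.atTop (nhds 1) := by
  have heq : ∀ x : ℝ, Real.tanh x = 1 - 2 / (Real.exp (2 * x) + 1) := by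
    intro x
    have : Real.exp (2 * x) + 1 ≠ 0 := by positivity
    rw [tanh_eq_exp]; field_simp; ring
  have h1 : Filter.Tendsto (fun x : ℝ => Real.exp (2 * x) + 1) Filter.atTop Filter.atTop := by
    apply Filter.tendsto_atTop_add_const_right
    exact Real.tendsto_exp_atTop.comp (Filter.tendsto_id.const_mul_atTop two_pos)
  have h2 : Filter.Tendsto (fun x : ℝ => 2 / (Real.exp (2 * x) + 1)) Filter.atTop (nhds 0) :=
    Filter.Tendsto.div_atTop tendsto_const_nhds h1
  have := (tendsto_const_nhds (x := (1:ℝ)) (f := Filter.atTop)).sub h2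
  rw [sub_zero] at this
  exact this.congr fun x => (heq x).symm

lemma stmt3_aux (s A : ℝ) (hs : s ≠ 0) (hss : s * s = 2) :
    -3 * (1 - A ^ 2) * (1 - 3 * A ^ 2)
      = -(6 * ((1 - A ^ 2) / s * (1 - A ^ 2) + A * (0 - 2 * A ^ 1 * ((1 - A ^ 2) / s)))) / s := by
  field_simp
  nlinarith [hss, sq_nonneg A, sq_nonneg (A * A)]

theorem stmt_3 (ζ : ℝ) (hζ₁ : -1 < ζ) (hζ₂ : ζ ≤ 2) :
    ContDiff ℝ 2 (θsol ζ) ∧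
    (∀ t : ℝ, deriv (deriv (θsol ζ)) t + (θsol ζ t) ^ 2 - 1 = 0) ∧
    θsol ζ 0 = ζ ∧
    Filter.Tendsto (θsol ζ) Filter.atTop (nhds (-1)) ∧
    (∀ t : ℝ, (1 / 2) * (deriv (θsol ζ) t) ^ 2 + (1 / 3) * (θsol ζ t) ^ 3 - θsol ζ t
      = 2 / 3) := by
  set a := artanh (Real.sqrt ((2 - ζ) / 3)) with ha
  set T : ℝ → ℝ := fun t => Real.tanh (t / Real.sqrt 2 + a) with hT
  have hθeq : θsol ζ = fun t => 2 - 3 * T t ^ 2 := rfl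
  have hs : (0:ℝ) < Real.sqrt 2 := Real.sqrt_pos.mpr two_pos
  have hss : Real.sqrt 2 * Real.sqrt 2 = 2 := Real.mul_self_sqrt (by norm_num)
  have hu : ∀ t : ℝ, HasDerivAt (fun t : ℝ => t / Real.sqrt 2 + a) (1 / Real.sqrt 2) t := by
    intro t
    simpa using ((hasDerivAt_id t).div_const (Real.sqrt 2)).add_const a
  have hTd : ∀ t : ℝ, HasDerivAt T ((1 - T t ^ 2) / Real.sqrt 2) t := by
    intro t
    have := (tanh_hasDerivAt (t / Real.sqrt 2 + a)).comp t (hu t)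
    simpa [hT, div_eq_mul_inv, mul_comm, Function.comp_def] using this
  have hθd : ∀ t : ℝ, HasDerivAt (θsol ζ)
      (-(6 * T t * (1 - T t ^ 2)) / Real.sqrt 2) t := by
    intro t
    rw [hθeq]
    have := (((hTd t).pow 2).const_mul (3:ℝ)).const_sub 2
    refine this.congr_deriv ?_
    push_cast
    field_simp
    ring
  have hθd_eq : deriv (θsol ζ) = fun t => -(6 * T t * (1 - T t ^ 2)) / Real.sqrt 2 :=
    funext fun t => (hθd t).deriv
  have hθdd : ∀ t : ℝ, HasDerivAt (deriv (θsol ζ))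
      (-3 * (1 - T t ^ 2) * (1 - 3 * T t ^ 2)) t := by
    intro t
    rw [hθd_eq]
    have h1 : HasDerivAt (fun t => T t * (1 - T t ^ 2))
        ((1 - T t ^ 2) / Real.sqrt 2 * (1 - T t ^ 2)
          + T t * (0 - 2 * T t ^ 1 * ((1 - T t ^ 2) / Real.sqrt 2))) t := by
      have := (hTd t).mul (((hTd t).pow 2).const_sub 1)
      refine this.congr_deriv ?_
      simp only [Pi.pow_apply]
      push_cast
      ring
    have h2 := ((h1.const_mul (6:ℝ)).neg).div_const (Real.sqrt 2)
    convert h2 using 1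
    · rfl
    · rfl
    · funext x; simp only [Pi.neg_apply]; ring
    · exact stmt3_aux (Real.sqrt 2) (T t) hs.ne' hss
  refine ⟨?_, ?_, ?_, ?_, ?_⟩
  · rw [hθeq]
    exact contDiff_const.sub (contDiff_const.mul
      ((contDiff_tanh.comp ((contDiff_id.div_const _).add contDiff_const)).pow 2))
  · intro t
    rw [(hθdd t).deriv, hθeq]
    ring
  · have hnn : (0:ℝ) ≤ (2 - ζ) / 3 := by linarith
    have hxlt : Real.sqrt ((2 - ζ) / 3) < 1 := by
      have hsq := Real.sq_sqrt hnn
      nlinarith [Real.sqrt_nonneg ((2 - ζ) / 3)]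
    have hxgt : (-1:ℝ) < Real.sqrt ((2 - ζ) / 3) := by
      have := Real.sqrt_nonneg ((2 - ζ) / 3); linarith
    have hT0 : T 0 = Real.sqrt ((2 - ζ) / 3) := by
      show Real.tanh (0 / Real.sqrt 2 + a) = _
      rw [zero_div, zero_add, ha, tanh_artanh hxgt hxlt]
    rw [hθeq]
    show 2 - 3 * T 0 ^ 2 = ζ
    rw [hT0, Real.sq_sqrt hnn]
    ring
  · rw [hθeq]
    have hTlim : Filter.Tendsto T Filter.atTop (nhds 1) := by
      apply tanh_tendsto.comp
      apply Filter.tendsto_atTop_add_const_right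
      exact Filter.Tendsto.atTop_div_const hs Filter.tendsto_id
    have : Filter.Tendsto (fun t => 2 - 3 * T t ^ 2) Filter.atTop (nhds (2 - 3 * 1 ^ 2)) :=
      tendsto_const_nhds.sub (tendsto_const_nhds.mul (hTlim.pow 2))
    norm_num at this
    exact this
  · intro t
    rw [hθd_eq, hθeq]
    simp only
    rw [div_pow, neg_pow, Real.sq_sqrt (by norm_num : (0:ℝ) ≤ 2)]
    ring
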